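/- Descent for presentations with faithfully flat covers: let R be a commutative ring, let A₁, …, Aₙ be commutative R-algebras such that the product ring A = A₁ × ⋯ × Aₙ is faithfully flat as an R-module, and let M be an R-module. Consider the sequence ∏_i M ⊗[R] A_i → ∏_{i,j} M ⊗[R] A_i ⊗[R] A_j → ∏_{i,j,k} M ⊗[R] A_i ⊗[R] A_j ⊗[R] A_k, where the first map sends (u_i) to the family whose (i,j)-component is (u_i ⊗ 1) − τ_{i,j}(u_j), with u_i ⊗ 1 the image of u_i under m ⊗ a ↦ m ⊗ a ⊗ 1 and τ_{i,j}(u_j) the image of u_j under m ⊗ a ↦ m ⊗ 1 ⊗ a, and the second map is the analogous alternating sum of the three insertions of a unit. Then the sequence is exact at the middle term: the kernel of the second map equals the range of the first. -/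
import Mathlib


open scoped TensorProduct
open TensorProduct LinearMap
set_option maxSynthPendingDepth 3
set_option synthInstance.maxHeartbeats 1000000
set_option maxHeartbeats 1000000

section Global
variable {R : Type*} [CommRing R] (S : Type*) [CommRing S] [Algebra R S]
variable (M : Type*) [AddCommGroup M] [Module R M]

/-- degree 0 Amitsur differential -/
noncomputable def amD0 : M ⊗[R] S →ₗ[R] (M ⊗[R] S) ⊗[R] S :=
  (TensorProduct.mk R (M ⊗[R] S) S).flip 1 - rTensor S ((TensorProduct.mk R M S).flip 1)

/-- degree 1 Amitsur differential -/
noncomputable def amD1 : (M ⊗[R] S) ⊗[R] S →ₗ[R] ((M ⊗[R] S) ⊗[R] S) ⊗[R] S :=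
  ((TensorProduct.mk R ((M ⊗[R] S) ⊗[R] S) S).flip 1 :
      (M ⊗[R] S) ⊗[R] S →ₗ[R] ((M ⊗[R] S) ⊗[R] S) ⊗[R] S)
    - (rTensor S ((TensorProduct.mk R (M ⊗[R] S) S).flip 1) :
      (M ⊗[R] S) ⊗[R] S →ₗ[R] ((M ⊗[R] S) ⊗[R] S) ⊗[R] S)
    + (rTensor S (rTensor S ((TensorProduct.mk R M S).flip 1)) :
      (M ⊗[R] S) ⊗[R] S →ₗ[R] ((M ⊗[R] S) ⊗[R] S) ⊗[R] S)

lemma amD0_tmul (m : M) (a : S) :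
    amD0 S M (m ⊗ₜ[R] a) = (m ⊗ₜ[R] a) ⊗ₜ[R] (1:S) - (m ⊗ₜ[R] (1:S)) ⊗ₜ[R] a := by
  simp [amD0]

lemma amD1_tmul (m : M) (a b : S) :
    amD1 S M ((m ⊗ₜ[R] a) ⊗ₜ[R] b) =
      ((m ⊗ₜ[R] a) ⊗ₜ[R] b) ⊗ₜ[R] (1:S) - ((m ⊗ₜ[R] a) ⊗ₜ[R] (1:S)) ⊗ₜ[R] b + ((m ⊗ₜ[R] (1:S)) ⊗ₜ[R] a) ⊗ₜ[R] b := by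
  simp [amD1]

noncomputable def amT : S ⊗[R] (M ⊗[R] S) →ₗ[R] S ⊗[R] M :=
  rTensor M (LinearMap.mul' R S)
    ∘ₗ (TensorProduct.assoc R S S M).symm.toLinearMap
    ∘ₗ lTensor S (TensorProduct.comm R M S).toLinearMap

lemma amT_tmul (a : S) (m : M) (b : S) : amT S M (a ⊗ₜ[R] (m ⊗ₜ[R] b)) = (a * b) ⊗ₜ[R] m := by
  simp [amT]

noncomputable def amS1 : S ⊗[R] ((M ⊗[R] S) ⊗[R] S) →ₗ[R] S ⊗[R] (M ⊗[R] S) :=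
  (TensorProduct.assoc R S M S).toLinearMap
    ∘ₗ rTensor S (amT S M)
    ∘ₗ (TensorProduct.assoc R S (M ⊗[R] S) S).symm.toLinearMap

lemma amS1_tmul (a : S) (m : M) (b c : S) :
    amS1 S M (a ⊗ₜ[R] ((m ⊗ₜ[R] b) ⊗ₜ[R] c)) = (a * b) ⊗ₜ[R] (m ⊗ₜ[R] c) := by
  simp [amS1, amT_tmul]

noncomputable def amS2 : S ⊗[R] (((M ⊗[R] S) ⊗[R] S) ⊗[R] S) →ₗ[R] S ⊗[R] ((M ⊗[R] S) ⊗[R] S) :=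
  (TensorProduct.assoc R S (M ⊗[R] S) S).toLinearMap
    ∘ₗ rTensor S (amS1 S M)
    ∘ₗ (TensorProduct.assoc R S ((M ⊗[R] S) ⊗[R] S) S).symm.toLinearMap

lemma amS2_tmul (a : S) (m : M) (b c d : S) :
    amS2 S M (a ⊗ₜ[R] (((m ⊗ₜ[R] b) ⊗ₜ[R] c) ⊗ₜ[R] d)) = (a * b) ⊗ₜ[R] ((m ⊗ₜ[R] c) ⊗ₜ[R] d) := by
  simp [amS2, amS1_tmul]

lemma amD1_comp_amD0 :
    amD1 S M ∘ₗ amD0 S M = (0 : M ⊗[R] S →ₗ[R] ((M ⊗[R] S) ⊗[R] S) ⊗[R] S) := by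
  ext m a
  simp [amD0_tmul, amD1_tmul]

lemma am_homotopy :
    amS2 S M ∘ₗ lTensor S (amD1 S M) =
      (lTensor S (amD0 S M) ∘ₗ amS1 S M :
        S ⊗[R] ((M ⊗[R] S) ⊗[R] S) →ₗ[R] S ⊗[R] ((M ⊗[R] S) ⊗[R] S))
        + (LinearMap.id : S ⊗[R] ((M ⊗[R] S) ⊗[R] S) →ₗ[R] S ⊗[R] ((M ⊗[R] S) ⊗[R] S)) := by
  ext a m b c
  simp [amD0_tmul, amD1_tmul, amS1_tmul, amS2_tmul, tmul_sub, tmul_add, mul_one]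

lemma am_exact [Module.FaithfullyFlat R S] :
    Function.Exact (P := ((M ⊗[R] S) ⊗[R] S) ⊗[R] S) ⇑(amD0 S M) ⇑(amD1 S M) := by
  apply Module.FaithfullyFlat.lTensor_reflects_exact R S
  intro y
  constructor
  · intro hy
    have h := congrArg (fun f => f y) (am_homotopy S M)
    simp only [LinearMap.comp_apply, LinearMap.add_apply, LinearMap.id_apply, hy, map_zero] at h
    exact ⟨-amS1 S M y, (map_neg _ _).trans (neg_eq_of_add_eq_zero_right h.symm)⟩
  · rintro ⟨x, rfl⟩
    rw [← LinearMap.comp_apply, ← lTensor_comp, amD1_comp_amD0, lTensor_zero,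
      LinearMap.zero_apply]

end Global

section Pi
variable (R : Type*) [CommRing R] {ι : Type*} [Fintype ι] [DecidableEq ι]

/-- tensor product commutes with finite products on the left -/
noncomputable def piL (X : ι → Type*) [∀ i, AddCommGroup (X i)] [∀ i, Module R (X i)]
    (Y : Type*) [AddCommGroup Y] [Module R Y] :
    ((∀ i, X i) ⊗[R] Y) ≃ₗ[R] ∀ i, X i ⊗[R] Y :=
  TensorProduct.comm R _ Y ≪≫ₗ TensorProduct.piRight R R Y X ≪≫ₗ
    LinearEquiv.piCongrRight (fun i => TensorProduct.comm R Y (X i))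

lemma piL_tmul (X : ι → Type*) [∀ i, AddCommGroup (X i)] [∀ i, Module R (X i)]
    (Y : Type*) [AddCommGroup Y] [Module R Y] (x : ∀ i, X i) (y : Y) :
    piL R X Y (x ⊗ₜ[R] y) = fun i => x i ⊗ₜ[R] y := by
  funext i
  simp [piL]

end Pi

section Prod
variable (R : Type*) [CommRing R] {n : ℕ} (A : Fin n → Type*)
  [∀ i, CommRing (A i)] [∀ i, Algebra R (A i)]
  (M : Type*) [AddCommGroup M] [Module R M]

/-- reindexing for double products -/
def pairEquiv (X : Fin n → Fin n → Type*) [∀ i j, AddCommGroup (X i j)]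
    [∀ i j, Module R (X i j)] :
    (∀ j i, X i j) ≃ₗ[R] ∀ p : Fin n × Fin n, X p.1 p.2 where
  toFun v p := v p.2 p.1
  invFun w j i := w (i, j)
  map_add' _ _ := rfl
  map_smul' _ _ := rfl
  left_inv _ := rfl
  right_inv _ := rfl

/-- reindexing for triple products -/
def tripleEquiv (X : Fin n → Fin n → Fin n → Type*) [∀ i j k, AddCommGroup (X i j k)]
    [∀ i j k, Module R (X i j k)] :
    (∀ k, ∀ p : Fin n × Fin n, X p.1 p.2 k) ≃ₗ[R]
      ∀ t : Fin n × Fin n × Fin n, X t.1 t.2.1 t.2.2 where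
  toFun v t := v t.2.2 (t.1, t.2.1)
  invFun w k p := w (p.1, p.2, k)
  map_add' _ _ := rfl
  map_smul' _ _ := rfl
  left_inv _ := rfl
  right_inv _ := rfl

/-- the equivalence `M ⊗ A ≃ ∏ᵢ M ⊗ Aᵢ` -/
noncomputable def eq0 : M ⊗[R] (∀ i, A i) ≃ₗ[R] ∀ i, M ⊗[R] A i :=
  TensorProduct.piRight R R M A

/-- the equivalence `(M ⊗ A) ⊗ A ≃ ∏ₚ (M ⊗ A p.1) ⊗ A p.2` -/
noncomputable def eq1 : (M ⊗[R] (∀ i, A i)) ⊗[R] (∀ i, A i) ≃ₗ[R]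
    ∀ p : Fin n × Fin n, (M ⊗[R] A p.1) ⊗[R] A p.2 :=
  TensorProduct.piRight R R (M ⊗[R] (∀ i, A i)) A ≪≫ₗ
    LinearEquiv.piCongrRight (fun j =>
      TensorProduct.congr (eq0 R A M) (LinearEquiv.refl R (A j)) ≪≫ₗ
        piL R (fun i => M ⊗[R] A i) (A j)) ≪≫ₗ
    pairEquiv R (fun i j => (M ⊗[R] A i) ⊗[R] A j)

/-- the equivalence for the triple tensor product -/
noncomputable def eq2 : ((M ⊗[R] (∀ i, A i)) ⊗[R] (∀ i, A i)) ⊗[R] (∀ i, A i) ≃ₗ[R]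
    ∀ t : Fin n × Fin n × Fin n, ((M ⊗[R] A t.1) ⊗[R] A t.2.1) ⊗[R] A t.2.2 :=
  TensorProduct.piRight R R ((M ⊗[R] (∀ i, A i)) ⊗[R] (∀ i, A i)) A ≪≫ₗ
    LinearEquiv.piCongrRight (fun k =>
      TensorProduct.congr (eq1 R A M) (LinearEquiv.refl R (A k)) ≪≫ₗ
        piL R (fun p : Fin n × Fin n => (M ⊗[R] A p.1) ⊗[R] A p.2) (A k)) ≪≫ₗ
    tripleEquiv R (fun i j k => ((M ⊗[R] A i) ⊗[R] A j) ⊗[R] A k)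

lemma eq0_tmul (m : M) (a : ∀ i, A i) :
    eq0 R A M (m ⊗ₜ[R] a) = fun i => m ⊗ₜ[R] a i := by
  simp [eq0]

lemma eq1_tmul (m : M) (a b : ∀ i, A i) :
    eq1 R A M ((m ⊗ₜ[R] a) ⊗ₜ[R] b) = fun p : Fin n × Fin n => (m ⊗ₜ[R] a p.1) ⊗ₜ[R] b p.2 := by
  funext p
  simp [eq1, pairEquiv, eq0_tmul, piL_tmul]

lemma eq2_tmul (m : M) (a b c : ∀ i, A i) :
    eq2 R A M (((m ⊗ₜ[R] a) ⊗ₜ[R] b) ⊗ₜ[R] c) =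
      fun t : Fin n × Fin n × Fin n => ((m ⊗ₜ[R] a t.1) ⊗ₜ[R] b t.2.1) ⊗ₜ[R] c t.2.2 := by
  funext t
  simp [eq2, tripleEquiv, eq1_tmul, piL_tmul]

/-- componentwise degree-0 differential -/
noncomputable def pD0 : (∀ i, M ⊗[R] A i) →ₗ[R] ∀ p : Fin n × Fin n, (M ⊗[R] A p.1) ⊗[R] A p.2 :=
  LinearMap.pi fun p =>
    ((TensorProduct.mk R (M ⊗[R] A p.1) (A p.2)).flip 1 ∘ₗ LinearMap.proj p.1)
      - (rTensor (A p.2) ((TensorProduct.mk R M (A p.1)).flip 1) ∘ₗ LinearMap.proj p.2)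

/-- componentwise degree-1 differential -/
noncomputable def pD1 : (∀ p : Fin n × Fin n, (M ⊗[R] A p.1) ⊗[R] A p.2) →ₗ[R]
    ∀ t : Fin n × Fin n × Fin n, ((M ⊗[R] A t.1) ⊗[R] A t.2.1) ⊗[R] A t.2.2 :=
  LinearMap.pi fun t =>
    ((TensorProduct.mk R ((M ⊗[R] A t.1) ⊗[R] A t.2.1) (A t.2.2)).flip 1
        ∘ₗ LinearMap.proj (t.1, t.2.1))
      - (rTensor (A t.2.2) ((TensorProduct.mk R (M ⊗[R] A t.1) (A t.2.1)).flip 1)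
        ∘ₗ LinearMap.proj (t.1, t.2.2))
      + (rTensor (A t.2.2) (rTensor (A t.2.1) ((TensorProduct.mk R M (A t.1)).flip 1))
        ∘ₗ LinearMap.proj (t.2.1, t.2.2))

lemma ladder0 :
    pD0 R A M ∘ₗ (eq0 R A M : M ⊗[R] (∀ i, A i) →ₗ[R] ∀ i, M ⊗[R] A i)
      = (eq1 R A M : (M ⊗[R] (∀ i, A i)) ⊗[R] (∀ i, A i) →ₗ[R] _) ∘ₗ amD0 (∀ i, A i) M := by
  apply TensorProduct.ext'
  intro m a
  funext p
  simp [pD0, eq0_tmul, eq1_tmul, amD0_tmul]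

lemma ladder1 :
    pD1 R A M ∘ₗ (eq1 R A M : (M ⊗[R] (∀ i, A i)) ⊗[R] (∀ i, A i) →ₗ[R] _)
      = (eq2 R A M : ((M ⊗[R] (∀ i, A i)) ⊗[R] (∀ i, A i)) ⊗[R] (∀ i, A i) →ₗ[R] _)
        ∘ₗ amD1 (∀ i, A i) M := by
  apply TensorProduct.ext'
  intro x b
  induction x using TensorProduct.induction_on with
  | zero => simp
  | add y z hy hz => simp only [add_tmul, map_add, hy, hz]
  | tmul m a =>
    funext t
    simp [pD1, eq1_tmul, eq2_tmul, amD1_tmul]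

lemma pExact [Module.FaithfullyFlat R (∀ i, A i)] :
    Function.Exact ⇑(pD0 R A M) ⇑(pD1 R A M) :=
  Function.Exact.of_ladder_linearEquiv_of_exact
    (e₁ := eq0 R A M) (e₂ := eq1 R A M) (e₃ := eq2 R A M)
    (ladder0 R A M) (ladder1 R A M) (am_exact _ M)

end Prod

set_option maxSynthPendingDepth 3 in
/-- **Descent for presentations with faithfully flat covers.**
If the product ring `A = A 0 × ⋯ × A (n-1)` of commutative `R`-algebras is faithfully
flat as an `R`-module, then for any `R`-module `M` the sequence
`∏ᵢ M ⊗ Aᵢ → ∏_{i,j} M ⊗ Aᵢ ⊗ Aⱼ → ∏_{i,j,k} M ⊗ Aᵢ ⊗ Aⱼ ⊗ Aₖ`, with maps the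
alternating sums of the insertions of a unit, is exact at the middle term. -/
theorem stmt15 {R : Type*} [CommRing R] {n : ℕ} (A : Fin n → Type*)
    [∀ i, CommRing (A i)] [∀ i, Algebra R (A i)]
    [Module.FaithfullyFlat R (∀ i, A i)]
    (M : Type*) [AddCommGroup M] [Module R M] :
    {v : ∀ p : Fin n × Fin n, (M ⊗[R] A p.1) ⊗[R] A p.2 |
      ∀ i j k : Fin n,
        (TensorProduct.mk R ((M ⊗[R] A i) ⊗[R] A j) (A k)).flip 1 (v (i, j))
          - LinearMap.rTensor (A k)
              ((TensorProduct.mk R (M ⊗[R] A i) (A j)).flip 1) (v (i, k))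
          + LinearMap.rTensor (A k)
              (LinearMap.rTensor (A j) ((TensorProduct.mk R M (A i)).flip 1)) (v (j, k))
          = 0} =
    Set.range (fun (u : ∀ i, M ⊗[R] A i) (p : Fin n × Fin n) =>
      (TensorProduct.mk R (M ⊗[R] A p.1) (A p.2)).flip 1 (u p.1)
        - LinearMap.rTensor (A p.2) ((TensorProduct.mk R M (A p.1)).flip 1) (u p.2)) := by
  ext v
  simp only [Set.mem_setOf_eq, Set.mem_range]
  constructor
  · intro h
    obtain ⟨u, hu⟩ := (pExact R A M v).mp (funext fun t => h t.1 t.2.1 t.2.2)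
    exact ⟨u, hu⟩
  · rintro ⟨u, rfl⟩ i j k
    exact congrFun ((pExact R A M).apply_apply_eq_zero u) (i, j, k)
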